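/- arXiv:1401.5662 — 3 statements merged into one kernel-verified Lean document; each statement's English description precedes it below -/
import Mathlib

section
/- Let T > 0, l > 0, a ≠ 0, b, c ∈ ℝ. Then classical solutions on [0, T] of the initial boundary value problem v_t(x,t) = a² v_xx(x,t) + b v_x(x,t) + c v(x,t) + g(x,t) for x ∈ (0,l), t ∈ (0,T), with Dirichlet boundary conditions v(0,t) = θ₁(t), v(l,t) = θ₂(t) and initial condition v(x,0) = ψ(x), are unique: if v₁ and v₂ are both classical solutions, then v₁ ≡ v₂ on [0,l] × [0,T]. -/
open Set Filter Topology intervalIntegral Real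

noncomputable section

/-- If `f` attains its max over `[a,m]` at `m > a` and is differentiable at `m`,
then `deriv f m ≥ 0`. -/
lemma deriv_nonneg_of_isMaxOn_right {f : ℝ → ℝ} {a m : ℝ} (ham : a < m)
    (hf : DifferentiableAt ℝ f m) (hmax : ∀ s ∈ Set.Icc a m, f s ≤ f m) :
    0 ≤ deriv f m := by
  have hslope : Tendsto (slope f m) (𝓝[≠] m) (𝓝 (deriv f m)) :=
    hasDerivAt_iff_tendsto_slope.1 hf.hasDerivAt
  have hslope' : Tendsto (slope f m) (𝓝[<] m) (𝓝 (deriv f m)) :=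
    hslope.mono_left (nhdsWithin_mono _ (fun y hy => ne_of_lt hy))
  refine ge_of_tendsto hslope' ?_
  filter_upwards [Ioo_mem_nhdsLT_of_mem (Set.mem_Ioc.2 ⟨ham, le_refl m⟩)] with s hs
  have h1 : f s - f m ≤ 0 := sub_nonpos.2 (hmax s ⟨hs.1.le, hs.2.le⟩)
  have h2 : s - m < 0 := sub_neg.2 hs.2
  rw [slope_def_field]
  exact div_nonneg_iff.2 (Or.inr ⟨h1, h2.le⟩)

/-- Second-derivative necessary condition: at a local max where `f` is differentiable
on a neighborhood and `deriv f` is differentiable, `deriv (deriv f) ≤ 0`. -/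
lemma deriv_deriv_nonpos_of_isLocalMax {f : ℝ → ℝ} {x₀ : ℝ} {s : Set ℝ}
    (hs : s ∈ 𝓝 x₀) (hd : ∀ x ∈ s, DifferentiableAt ℝ f x)
    (hd2 : DifferentiableAt ℝ (deriv f) x₀) (hmax : IsLocalMax f x₀) :
    deriv (deriv f) x₀ ≤ 0 := by
  by_contra hpos
  push_neg at hpos
  have h1 : deriv f x₀ = 0 := hmax.deriv_eq_zero
  have hslope : Tendsto (slope (deriv f) x₀) (𝓝[>] x₀) (𝓝 (deriv (deriv f) x₀)) :=
    (hasDerivAt_iff_tendsto_slope.1 hd2.hasDerivAt).mono_left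
      (nhdsWithin_mono _ (fun y hy => ne_of_gt hy))
  have hev : ∀ᶠ y in 𝓝[>] x₀, 0 < slope (deriv f) x₀ y :=
    hslope.eventually (eventually_gt_nhds hpos)
  have hevpos : ∀ᶠ y in 𝓝[>] x₀, 0 < deriv f y := by
    filter_upwards [hev, self_mem_nhdsWithin] with y hy hy'
    rw [slope_def_field, h1, sub_zero] at hy
    have hxy : (0:ℝ) < y - x₀ := sub_pos.2 hy'
    have := mul_pos hy hxy
    rwa [div_mul_cancel₀ _ (ne_of_gt hxy)] at this
  have hmax' : ∀ᶠ y in 𝓝 x₀, f y ≤ f x₀ := hmax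
  have hsev : ∀ᶠ y in 𝓝 x₀, y ∈ s := hs
  obtain ⟨u, hu, hIoo⟩ := mem_nhdsGT_iff_exists_Ioo_subset.1
    (hevpos.and ((hmax'.and hsev).filter_mono nhdsWithin_le_nhds))
  set m := (x₀ + u) / 2 with hm
  have hx₀m : x₀ < m := by simp only [hm]; linarith [mem_Ioi.1 hu]
  have hmu : m < u := by simp only [hm]; linarith [mem_Ioi.1 hu]
  have hsub : Ioo x₀ m ⊆ Ioo x₀ u := Ioo_subset_Ioo le_rfl hmu.le
  have hmono : StrictMonoOn f (Set.Icc x₀ m) := by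
    refine strictMonoOn_of_deriv_pos (convex_Icc _ _) ?_ ?_
    · intro y hy
      rcases eq_or_lt_of_le hy.1 with h | h
      · subst h
        exact (hd x₀ (mem_of_mem_nhds hs)).continuousAt.continuousWithinAt
      · exact ((hd y (hIoo ⟨h, lt_of_le_of_lt hy.2 hmu⟩).2.2).continuousAt).continuousWithinAt
    · intro y hy
      rw [interior_Icc] at hy
      exact (hIoo (hsub hy)).1
  have hlt : f x₀ < f m := hmono (left_mem_Icc.2 hx₀m.le) (right_mem_Icc.2 hx₀m.le) hx₀m
  exact absurd (hIoo ⟨hx₀m, hmu⟩).2.1 (not_le.2 hlt)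

lemma eqOn_zero_Icc {f : ℝ → ℝ} {p q : ℝ} (hpq : p < q)
    (hf : ContinuousOn f (Set.Icc p q)) (h0 : ∀ x ∈ Set.Ioo p q, f x = 0) :
    ∀ x ∈ Set.Icc p q, f x = 0 := by
  intro x hx
  have hcl : x ∈ closure (Set.Ioo p q) := by rw [closure_Ioo hpq.ne]; exact hx
  have hne : (𝓝[Set.Ioo p q] x).NeBot := mem_closure_iff_nhdsWithin_neBot.1 hcl
  have h1 : Tendsto f (𝓝[Set.Ioo p q] x) (𝓝 (f x)) :=
    ((hf x hx).mono Set.Ioo_subset_Icc_self).tendsto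
  have h2 : Tendsto f (𝓝[Set.Ioo p q] x) (𝓝 0) := by
    refine Tendsto.congr' ?_ tendsto_const_nhds
    filter_upwards [self_mem_nhdsWithin] with y hy
    exact (h0 y hy).symm
  exact tendsto_nhds_unique h1 h2

lemma le_zero_Icc {f : ℝ → ℝ} {p q : ℝ} (hpq : p < q)
    (hf : ContinuousOn f (Set.Icc p q)) (h0 : ∀ x ∈ Set.Ico p q, f x ≤ 0) :
    ∀ x ∈ Set.Icc p q, f x ≤ 0 := by
  intro x hx
  have hcl : x ∈ closure (Set.Ico p q) := by rw [closure_Ico hpq.ne]; exact hx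
  have hne : (𝓝[Set.Ico p q] x).NeBot := mem_closure_iff_nhdsWithin_neBot.1 hcl
  have h1 : Tendsto f (𝓝[Set.Ico p q] x) (𝓝 (f x)) :=
    ((hf x hx).mono Set.Ico_subset_Icc_self).tendsto
  exact le_of_tendsto h1 (eventually_nhdsWithin_of_forall h0)

lemma heat_max_principle (a b l T : ℝ) (ha : a ≠ 0) (hl : 0 < l) (hT : 0 < T)
    (u : ℝ → ℝ → ℝ)
    (hc : ContinuousOn (fun p : ℝ × ℝ => u p.1 p.2) (Set.Icc 0 l ×ˢ Set.Icc 0 T))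
    (hdt : ∀ x ∈ Set.Ioo 0 l, ∀ t ∈ Set.Ioo 0 T, DifferentiableAt ℝ (fun s => u x s) t)
    (hdx : ∀ x ∈ Set.Ioo 0 l, ∀ t ∈ Set.Ioo 0 T, DifferentiableAt ℝ (fun y => u y t) x)
    (hdxx : ∀ x ∈ Set.Ioo 0 l, ∀ t ∈ Set.Ioo 0 T,
      DifferentiableAt ℝ (deriv (fun y => u y t)) x)
    (hpde : ∀ x ∈ Set.Ioo 0 l, ∀ t ∈ Set.Ioo 0 T,
      deriv (fun s => u x s) t =
        a ^ 2 * deriv (deriv (fun y => u y t)) x + b * deriv (fun y => u y t) x)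
    (hb0 : ∀ t ∈ Set.Icc 0 T, u 0 t = 0) (hbl : ∀ t ∈ Set.Icc 0 T, u l t = 0)
    (hb1 : ∀ x ∈ Set.Icc 0 l, u x 0 = 0) :
    ∀ x ∈ Set.Icc 0 l, ∀ t ∈ Set.Icc 0 T, u x t ≤ 0 := by
  -- Step A: for every `T' ∈ (0,T)` and `ε > 0`, `u x t ≤ ε * t` on `[0,l] × [0,T']`.
  have stepA : ∀ T' ∈ Set.Ioo 0 T, ∀ ε : ℝ, 0 < ε →
      ∀ x ∈ Set.Icc 0 l, ∀ t ∈ Set.Icc 0 T', u x t ≤ ε * t := by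
    intro T' hT' ε hε
    set K : Set (ℝ × ℝ) := Set.Icc 0 l ×ˢ Set.Icc 0 T' with hK
    have hKsub : K ⊆ Set.Icc 0 l ×ˢ Set.Icc 0 T :=
      Set.prod_mono_right (Set.Icc_subset_Icc le_rfl hT'.2.le)
    have hKc : IsCompact K := isCompact_Icc.prod isCompact_Icc
    have hKne : K.Nonempty := ⟨(0, 0), ⟨⟨le_rfl, hl.le⟩, ⟨le_rfl, hT'.1.le⟩⟩⟩
    set φ : ℝ × ℝ → ℝ := fun p => u p.1 p.2 - ε * p.2 with hφ
    have hφc : ContinuousOn φ K :=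
      (hc.mono hKsub).sub (Continuous.continuousOn (by fun_prop))
    obtain ⟨⟨x₀, t₀⟩, hmem, hmax⟩ := hKc.exists_isMaxOn hKne hφc
    have hmax' : ∀ q ∈ K, φ q ≤ φ (x₀, t₀) := fun q hq => hmax hq
    have hx₀ : x₀ ∈ Set.Icc 0 l := hmem.1
    have ht₀ : t₀ ∈ Set.Icc 0 T' := hmem.2
    suffices hφ0 : φ (x₀, t₀) ≤ 0 by
      intro x hx t ht
      have h := hmax' (x, t) ⟨hx, ht⟩
      simp only [hφ] at h hφ0
      linarith
    by_contra hpos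
    push_neg at hpos
    have hu0 : 0 < u x₀ t₀ := by
      have ht₀0 : 0 ≤ t₀ := ht₀.1
      simp only [hφ] at hpos
      nlinarith
    have hx₀i : x₀ ∈ Set.Ioo 0 l := by
      have ht₀T : t₀ ∈ Set.Icc 0 T := ⟨ht₀.1, ht₀.2.trans hT'.2.le⟩
      constructor
      · rcases eq_or_lt_of_le hx₀.1 with h | h
        · rw [← h] at hu0; rw [hb0 t₀ ht₀T] at hu0; exact absurd hu0 (lt_irrefl 0)
        · exact h
      · rcases eq_or_lt_of_le hx₀.2 with h | h
        · rw [h] at hu0; rw [hbl t₀ ht₀T] at hu0; exact absurd hu0 (lt_irrefl 0)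
        · exact h
    have ht₀i : 0 < t₀ := by
      rcases eq_or_lt_of_le ht₀.1 with h | h
      · rw [← h] at hu0; rw [hb1 x₀ hx₀] at hu0; exact absurd hu0 (lt_irrefl 0)
      · exact h
    have ht₀T : t₀ ∈ Set.Ioo 0 T := ⟨ht₀i, lt_of_le_of_lt ht₀.2 hT'.2⟩
    -- time direction: deriv_t u ≥ ε at (x₀, t₀)
    have hεs : HasDerivAt (fun s : ℝ => ε * s) ε t₀ := by
      simpa using (hasDerivAt_id t₀).const_mul ε
    have huts : HasDerivAt (fun s => u x₀ s) (deriv (fun s => u x₀ s) t₀) t₀ :=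
      (hdt x₀ hx₀i t₀ ht₀T).hasDerivAt
    have hft := huts.sub hεs
    have hmaxt : ∀ s ∈ Set.Icc 0 t₀, u x₀ s - ε * s ≤ u x₀ t₀ - ε * t₀ := by
      intro s hs
      exact hmax' (x₀, s) ⟨hx₀, ⟨hs.1, hs.2.trans ht₀.2⟩⟩
    have hderivt : 0 ≤ deriv (fun s => u x₀ s - ε * s) t₀ :=
      deriv_nonneg_of_isMaxOn_right ht₀i hft.differentiableAt hmaxt
    rw [show (fun s => u x₀ s - ε * s) = ((fun s => u x₀ s) - fun s => ε * s) from rfl,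
      hft.deriv] at hderivt
    have htime : ε ≤ deriv (fun s => u x₀ s) t₀ := by linarith
    -- space direction
    have hlocmax : IsLocalMax (fun y => u y t₀) x₀ := by
      filter_upwards [Icc_mem_nhds hx₀i.1 hx₀i.2] with y hy
      have h := hmax' (y, t₀) ⟨hy, ht₀⟩
      simp only [hφ] at h
      show u y t₀ ≤ u x₀ t₀
      linarith
    have hgx : deriv (fun y => u y t₀) x₀ = 0 := hlocmax.deriv_eq_zero
    have hgxx : deriv (deriv (fun y => u y t₀)) x₀ ≤ 0 :=
      deriv_deriv_nonpos_of_isLocalMax (Ioo_mem_nhds hx₀i.1 hx₀i.2)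
        (fun y hy => hdx y hy t₀ ht₀T) (hdxx x₀ hx₀i t₀ ht₀T) hlocmax
    have hpde' := hpde x₀ hx₀i t₀ ht₀T
    have ha2 : 0 < a ^ 2 := by positivity
    have hterm : a ^ 2 * deriv (deriv (fun y => u y t₀)) x₀ ≤ 0 :=
      mul_nonpos_iff.2 (Or.inl ⟨ha2.le, hgxx⟩)
    rw [hgx, mul_zero, add_zero] at hpde'
    linarith
  -- Step B: conclude `u ≤ 0` on `[0,l] × [0,T)`, then extend to `t = T` by continuity.
  have stepB : ∀ x ∈ Set.Icc 0 l, ∀ t ∈ Set.Ico 0 T, u x t ≤ 0 := by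
    intro x hx t ht
    set T' : ℝ := (t + T) / 2 with hT'def
    have hT' : T' ∈ Set.Ioo 0 T := ⟨by simp only [hT'def]; linarith [ht.1, hT], by
      simp only [hT'def]; linarith [ht.2]⟩
    have htT' : t ∈ Set.Icc 0 T' := ⟨ht.1, by simp only [hT'def]; linarith [ht.2]⟩
    have key : ∀ ε : ℝ, 0 < ε → u x t ≤ ε := by
      intro ε hε
      have h := stepA T' hT' (ε / (T + 1)) (by positivity) x hx t htT'
      have htle : t ≤ T := ht.2.le
      have : (ε / (T + 1)) * t ≤ ε := by
        rw [div_mul_eq_mul_div, div_le_iff₀ (by linarith)]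
        nlinarith [ht.1]
      linarith
    by_contra hcon
    push_neg at hcon
    linarith [key (u x t / 2) (by linarith)]
  intro x hx
  refine le_zero_Icc hT ?_ (fun t ht => stepB x hx t ht)
  exact hc.comp (f := fun t : ℝ => ((x, t) : ℝ × ℝ))
    (continuous_const.prodMk continuous_id).continuousOn (fun t ht => ⟨hx, ht⟩)



/-- A classical solution on `[0, T]` of the initial boundary value problem
`v_t = a² v_xx + b v_x + c v + g` on `(0, l) × (0, T)` with Dirichlet boundary
conditions `v(0,t) = θ₁(t)`, `v(l,t) = θ₂(t)` and initial condition `v(x,0) = ψ(x)`: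
`v, v_t, v_xx ∈ C⁰([0,l] × [0,T])` and the equation and side conditions hold pointwise. -/
def IsClassicalSolution (a b c l T : ℝ) (g : ℝ → ℝ → ℝ) (θ₁ θ₂ ψ : ℝ → ℝ)
    (v : ℝ → ℝ → ℝ) : Prop :=
  ContinuousOn (fun p : ℝ × ℝ => v p.1 p.2) (Set.Icc 0 l ×ˢ Set.Icc 0 T) ∧
  ContinuousOn (fun p : ℝ × ℝ => deriv (fun s => v p.1 s) p.2) (Set.Icc 0 l ×ˢ Set.Icc 0 T) ∧
  ContinuousOn (fun p : ℝ × ℝ => deriv (fun y => deriv (fun z => v z p.2) y) p.1)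
    (Set.Icc 0 l ×ˢ Set.Icc 0 T) ∧
  (∀ x ∈ Set.Ioo 0 l, ∀ t ∈ Set.Ioo 0 T,
    DifferentiableAt ℝ (fun s => v x s) t ∧
    DifferentiableAt ℝ (fun y => v y t) x ∧
    DifferentiableAt ℝ (fun y => deriv (fun z => v z t) y) x) ∧
  (∀ x ∈ Set.Ioo 0 l, ∀ t ∈ Set.Ioo 0 T,
    deriv (fun s => v x s) t =
      a ^ 2 * deriv (fun y => deriv (fun z => v z t) y) x
        + b * deriv (fun y => v y t) x + c * v x t + g x t) ∧
  (∀ t ∈ Set.Ioo 0 T, v 0 t = θ₁ t ∧ v l t = θ₂ t) ∧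
  (∀ x ∈ Set.Ioo 0 l, v x 0 = ψ x)

/-- Comparison: the scaled difference of two classical solutions satisfies the
hypotheses of the maximum principle, hence `v₁ ≤ v₂`. -/
lemma classicalSolution_le
    (a b c l T : ℝ) (ha : a ≠ 0) (hl : 0 < l) (hT : 0 < T)
    (g : ℝ → ℝ → ℝ) (θ₁ θ₂ ψ : ℝ → ℝ) (v₁ v₂ : ℝ → ℝ → ℝ)
    (h₁ : IsClassicalSolution a b c l T g θ₁ θ₂ ψ v₁)
    (h₂ : IsClassicalSolution a b c l T g θ₁ θ₂ ψ v₂) :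
    ∀ x ∈ Set.Icc 0 l, ∀ t ∈ Set.Icc 0 T, v₁ x t ≤ v₂ x t := by
  obtain ⟨hc₁, hct₁, hcxx₁, hdiff₁, hpde₁, hbd₁, hin₁⟩ := h₁
  obtain ⟨hc₂, hct₂, hcxx₂, hdiff₂, hpde₂, hbd₂, hin₂⟩ := h₂
  set w : ℝ → ℝ → ℝ := fun x t => v₁ x t - v₂ x t with hw
  set E : ℝ → ℝ := fun t => Real.exp (-(c * t)) with hE
  set u : ℝ → ℝ → ℝ := fun x t => E t * w x t with hu
  -- continuity of w and u
  have hwc : ContinuousOn (fun p : ℝ × ℝ => w p.1 p.2) (Set.Icc 0 l ×ˢ Set.Icc 0 T) :=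
    hc₁.sub hc₂
  have hEc : Continuous E := by fun_prop
  have huc : ContinuousOn (fun p : ℝ × ℝ => u p.1 p.2) (Set.Icc 0 l ×ˢ Set.Icc 0 T) :=
    ((hEc.comp continuous_snd).continuousOn).mul hwc
  -- w vanishes on the closed parabolic boundary
  have hw0 : ∀ t ∈ Set.Icc 0 T, w 0 t = 0 := by
    refine eqOn_zero_Icc hT ?_ (fun t ht => ?_)
    · exact hwc.comp (f := fun t : ℝ => ((0, t) : ℝ × ℝ))
        (continuous_const.prodMk continuous_id).continuousOn
        (fun t ht => ⟨⟨le_rfl, hl.le⟩, ht⟩)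
    · simp only [hw, (hbd₁ t ht).1, (hbd₂ t ht).1, sub_self]
  have hwl : ∀ t ∈ Set.Icc 0 T, w l t = 0 := by
    refine eqOn_zero_Icc hT ?_ (fun t ht => ?_)
    · exact hwc.comp (f := fun t : ℝ => ((l, t) : ℝ × ℝ))
        (continuous_const.prodMk continuous_id).continuousOn
        (fun t ht => ⟨⟨hl.le, le_rfl⟩, ht⟩)
    · simp only [hw, (hbd₁ t ht).2, (hbd₂ t ht).2, sub_self]
  have hwi : ∀ x ∈ Set.Icc 0 l, w x 0 = 0 := by
    refine eqOn_zero_Icc hl ?_ (fun x hx => ?_)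
    · exact hwc.comp (f := fun x : ℝ => ((x, 0) : ℝ × ℝ))
        (continuous_id.prodMk continuous_const).continuousOn
        (fun x hx => ⟨hx, ⟨le_rfl, hT.le⟩⟩)
    · simp only [hw, hin₁ x hx, hin₂ x hx, sub_self]
  -- derivative facts at interior points
  have key : ∀ x ∈ Set.Ioo 0 l, ∀ t ∈ Set.Ioo 0 T,
      HasDerivAt (fun s => u x s)
        (-c * E t * w x t + E t * (deriv (fun s => v₁ x s) t - deriv (fun s => v₂ x s) t)) t ∧
      HasDerivAt (fun y => u y t)
        (E t * (deriv (fun y => v₁ y t) x - deriv (fun y => v₂ y t) x)) x ∧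
      HasDerivAt (deriv (fun y => u y t))
        (E t * (deriv (deriv (fun y => v₁ y t)) x - deriv (deriv (fun y => v₂ y t)) x)) x := by
    intro x hx t ht
    have d₁ := hdiff₁ x hx t ht
    have d₂ := hdiff₂ x hx t ht
    -- time derivative of w
    have hwt : HasDerivAt (fun s => w x s)
        (deriv (fun s => v₁ x s) t - deriv (fun s => v₂ x s) t) t :=
      d₁.1.hasDerivAt.sub d₂.1.hasDerivAt
    -- time derivative of E
    have hEd : HasDerivAt E (-c * E t) t := by
      have h0 : HasDerivAt (fun s : ℝ => -(c * s)) (-c) t := by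
        simpa [Pi.neg_def] using ((hasDerivAt_id t).const_mul c).neg
      simpa [hE, mul_comm] using h0.exp
    have hut : HasDerivAt (fun s => u x s)
        (-c * E t * w x t + E t * (deriv (fun s => v₁ x s) t - deriv (fun s => v₂ x s) t)) t :=
      hEd.mul hwt
    -- space derivative of w
    have hwx : HasDerivAt (fun y => w y t)
        (deriv (fun y => v₁ y t) x - deriv (fun y => v₂ y t) x) x :=
      d₁.2.1.hasDerivAt.sub d₂.2.1.hasDerivAt
    have hux : HasDerivAt (fun y => u y t)
        (E t * (deriv (fun y => v₁ y t) x - deriv (fun y => v₂ y t) x)) x :=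
      hwx.const_mul (E t)
    -- second space derivative of u
    have hev : (deriv (fun y => u y t)) =ᶠ[𝓝 x]
        (fun y => E t * (deriv (fun z => v₁ z t) y - deriv (fun z => v₂ z t) y)) := by
      filter_upwards [Ioo_mem_nhds hx.1 hx.2] with y hy
      have dy₁ := hdiff₁ y hy t ht
      have dy₂ := hdiff₂ y hy t ht
      have hwy : HasDerivAt (fun z => w z t)
          (deriv (fun z => v₁ z t) y - deriv (fun z => v₂ z t) y) y :=
        dy₁.2.1.hasDerivAt.sub dy₂.2.1.hasDerivAt
      exact (hwy.const_mul (E t)).deriv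
    have hdd : HasDerivAt
        (fun y => E t * (deriv (fun z => v₁ z t) y - deriv (fun z => v₂ z t) y))
        (E t * (deriv (deriv (fun y => v₁ y t)) x - deriv (deriv (fun y => v₂ y t)) x)) x :=
      (d₁.2.2.hasDerivAt.sub d₂.2.2.hasDerivAt).const_mul (E t)
    exact ⟨hut, hux, hdd.congr_of_eventuallyEq hev⟩
  -- apply the maximum principle to u
  have hmain : ∀ x ∈ Set.Icc 0 l, ∀ t ∈ Set.Icc 0 T, u x t ≤ 0 := by
    refine heat_max_principle a b l T ha hl hT u huc ?_ ?_ ?_ ?_ ?_ ?_ ?_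
    · exact fun x hx t ht => ((key x hx t ht).1).differentiableAt
    · exact fun x hx t ht => ((key x hx t ht).2.1).differentiableAt
    · exact fun x hx t ht => ((key x hx t ht).2.2).differentiableAt
    · intro x hx t ht
      obtain ⟨hut, hux, huxx⟩ := key x hx t ht
      rw [hut.deriv, hux.deriv, huxx.deriv]
      have e₁ := hpde₁ x hx t ht
      have e₂ := hpde₂ x hx t ht
      simp only [hu, hw]
      linear_combination E t * e₁ - E t * e₂
    · intro t ht
      simp only [hu, hw0 t ht, mul_zero]
    · intro t ht
      simp only [hu, hwl t ht, mul_zero]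
    · intro x hx
      simp only [hu, hwi x hx, mul_zero]
  intro x hx t ht
  have h := hmain x hx t ht
  have hEpos : 0 < E t := Real.exp_pos _
  simp only [hu, hw] at h
  nlinarith

/-- Classical solutions of the linear 1D heat equation without delay are unique. -/
theorem uniqueness_of_classical_solutions
    (a b c l T : ℝ) (ha : a ≠ 0) (hl : 0 < l) (hT : 0 < T)
    (g : ℝ → ℝ → ℝ) (θ₁ θ₂ ψ : ℝ → ℝ) (v₁ v₂ : ℝ → ℝ → ℝ)
    (h₁ : IsClassicalSolution a b c l T g θ₁ θ₂ ψ v₁)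
    (h₂ : IsClassicalSolution a b c l T g θ₁ θ₂ ψ v₂) :
    ∀ x ∈ Set.Icc 0 l, ∀ t ∈ Set.Icc 0 T, v₁ x t = v₂ x t := by
  intro x hx t ht
  exact le_antisymm
    (classicalSolution_le a b c l T ha hl hT g θ₁ θ₂ ψ v₁ v₂ h₁ h₂ x hx t ht)
    (classicalSolution_le a b c l T ha hl hT g θ₁ θ₂ ψ v₂ v₁ h₂ h₁ x hx t ht)

end
end

section
/- Let T > 0, τ > 0, l > 0, a₁, a₂ ≠ 0, b₁, b₂, d₁, d₂ ∈ ℝ. Then classical solutions on [0,T] of the delay heat equation v_t(x,t) = a₁² v_xx(x,t) + a₂² v_xx(x,t−τ) + b₁ v_x(x,t) + b₂ v_x(x,t−τ) + d₁ v(x,t) + d₂ v(x,t−τ) + g(x,t) for x ∈ (0,l), t ∈ (0,T), with boundary conditions v(0,t) = θ₁(t), v(l,t) = θ₂(t) for t ∈ (−τ,T) and initial condition v(x,t) = ψ(x,t) for x ∈ (0,l), t ∈ (−τ,0), are unique: any two classical solutions coincide on [0,l] × [−τ,T]. -/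
open Set Filter Topology intervalIntegral Real

noncomputable section

set_option maxHeartbeats 1000000

private lemma derivNonnegLeftMax (f : ℝ → ℝ) (b : ℝ) (hd : DifferentiableAt ℝ f b)
    (h : ∀ᶠ s in 𝓝[<] b, f s ≤ f b) : 0 ≤ deriv f b := by
  have hs := hd.hasDerivAt
  rw [hasDerivAt_iff_tendsto_slope] at hs
  have hs' : Tendsto (slope f b) (𝓝[<] b) (𝓝 (deriv f b)) :=
    hs.mono_left (nhdsWithin_mono _ (fun x hx => ne_of_lt hx))
  refine ge_of_tendsto hs' ?_
  filter_upwards [h, self_mem_nhdsWithin] with s hsle hslt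
  have h1 : f s - f b ≤ 0 := by linarith
  have h2 : s - b < 0 := sub_neg.2 hslt
  simpa [slope_def_field, div_eq_mul_inv] using div_nonneg_of_nonpos h1 h2.le

private lemma closureZero (f : ℝ × ℝ → ℝ) (S A : Set (ℝ × ℝ)) (hA : A ⊆ S)
    (hf : ContinuousOn f S) (hz : ∀ p ∈ A, f p = 0) {p : ℝ × ℝ} (hp : p ∈ S)
    (hcl : p ∈ closure A) : f p = 0 := by
  have h1 : Tendsto f (𝓝[A] p) (𝓝 (f p)) := (hf p hp).mono hA
  have h2 : Tendsto f (𝓝[A] p) (𝓝 0) := by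
    refine Tendsto.congr' ?_ tendsto_const_nhds
    filter_upwards [self_mem_nhdsWithin] with q hq using (hz q hq).symm
  have : (𝓝[A] p).NeBot := mem_closure_iff_nhdsWithin_neBot.mp hcl
  exact tendsto_nhds_unique h1 h2

private lemma derivDerivNonposLocalMax (f : ℝ → ℝ) (x : ℝ) (hmax : IsLocalMax f x)
    (hd : ∀ᶠ y in 𝓝 x, DifferentiableAt ℝ f y)
    (hd2 : DifferentiableAt ℝ (deriv f) x) :
    deriv (deriv f) x ≤ 0 := by
  by_contra hpos
  push_neg at hpos
  have hg0 : deriv f x = 0 := hmax.deriv_eq_zero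
  -- slope of g := deriv f tends to deriv (deriv f) x > 0, so g > 0 just right of x
  have hs := hd2.hasDerivAt
  rw [hasDerivAt_iff_tendsto_slope] at hs
  have hs' : Tendsto (slope (deriv f) x) (𝓝[>] x) (𝓝 (deriv (deriv f) x)) :=
    hs.mono_left (nhdsWithin_mono _ (fun y hy => ne_of_gt hy))
  have hev : ∀ᶠ y in 𝓝[>] x, 0 < slope (deriv f) x y :=
    hs'.eventually (eventually_gt_nhds hpos)
  -- get explicit radii
  obtain ⟨ε₁, hε₁, hball⟩ := Metric.eventually_nhds_iff.mp (hd.and hmax)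
  obtain ⟨ε₂, hε₂, hball2⟩ := Metric.eventually_nhds_iff.mp (eventually_nhdsWithin_iff.mp hev)
  set ε := min ε₁ ε₂ with hε
  have hεpos : 0 < ε := lt_min hε₁ hε₂
  set y := x + ε / 2 with hy
  have hxy : x < y := by simp [hy]; linarith
  have hmem : ∀ z ∈ Icc x y, DifferentiableAt ℝ f z ∧ f z ≤ f x := by
    intro z hz
    apply hball
    rw [Real.dist_eq, abs_lt]
    constructor <;> [skip; skip] <;>
      · rcases hz with ⟨h1, h2⟩
        have : ε ≤ ε₁ := min_le_left _ _
        simp [hy] at h2 ⊢ <;> linarith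
  have hgpos : ∀ z ∈ Ioc x y, 0 < deriv f z := by
    intro z hz
    have hd1 : dist z x < ε₂ := by
      rw [Real.dist_eq, abs_lt]
      have : ε ≤ ε₂ := min_le_right _ _
      rcases hz with ⟨h1, h2⟩
      constructor <;> simp [hy] at h2 ⊢ <;> linarith
    have := hball2 hd1 hz.1
    have hzx : (0:ℝ) < z - x := by linarith [hz.1]
    rw [slope_def_field, hg0] at this
    have h5 : 0 < (deriv f z - 0) * (z - x)⁻¹ := by
      simpa [div_eq_mul_inv] using this
    nlinarith [inv_pos.mpr hzx, mul_pos h5 hzx, sub_zero (deriv f z)]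
  -- MVT on [x,y]
  obtain ⟨c, hc, hceq⟩ := exists_hasDerivAt_eq_slope f (deriv f) hxy
    (fun z hz => ((hmem z hz).1.continuousAt.continuousWithinAt))
    (fun z hz => ((hmem z ⟨hz.1.le, hz.2.le⟩).1.hasDerivAt))
  have h1 : 0 < deriv f c := hgpos c ⟨hc.1, hc.2.le⟩
  have h2 : f y ≤ f x := (hmem y ⟨hxy.le, le_refl _⟩).2
  rw [hceq] at h1
  have hyx : (0:ℝ) < y - x := by linarith
  have := mul_pos h1 hyx
  rw [div_mul_cancel₀ _ (ne_of_gt hyx)] at this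
  linarith

private lemma heatMaxPrinciple (a₁ b₁ d₁ l t₀ t₁ : ℝ) (hl : 0 < l) (h01 : t₀ < t₁)
    (w : ℝ → ℝ → ℝ)
    (hc : ContinuousOn (fun p : ℝ × ℝ => w p.1 p.2) (Icc 0 l ×ˢ Icc t₀ t₁))
    (hinit : ∀ x ∈ Icc 0 l, w x t₀ = 0)
    (hb0 : ∀ t ∈ Icc t₀ t₁, w 0 t = 0)
    (hbl : ∀ t ∈ Icc t₀ t₁, w l t = 0)
    (hdt : ∀ x ∈ Ioo 0 l, ∀ t ∈ Ioc t₀ t₁, DifferentiableAt ℝ (fun s => w x s) t)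
    (hdx : ∀ x ∈ Ioo 0 l, ∀ t ∈ Ioc t₀ t₁, DifferentiableAt ℝ (fun y => w y t) x)
    (hdxx : ∀ x ∈ Ioo 0 l, ∀ t ∈ Ioc t₀ t₁,
      DifferentiableAt ℝ (fun y => deriv (fun z => w z t) y) x)
    (hpde : ∀ x ∈ Ioo 0 l, ∀ t ∈ Ioc t₀ t₁,
      deriv (fun s => w x s) t = a₁ ^ 2 * deriv (fun y => deriv (fun z => w z t) y) x
        + b₁ * deriv (fun y => w y t) x + d₁ * w x t) :
    ∀ x ∈ Icc 0 l, ∀ t ∈ Icc t₀ t₁, w x t ≤ 0 := by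
  by_contra hcon
  push_neg at hcon
  obtain ⟨x₂, hx₂, t₂, ht₂, hposw⟩ := hcon
  obtain ⟨lam, hlam⟩ : ∃ lam : ℝ, lam = |d₁| + 1 := ⟨_, rfl⟩
  obtain ⟨u, hu⟩ : ∃ u : ℝ × ℝ → ℝ, u = fun p => Real.exp (-lam * p.2) * w p.1 p.2 := ⟨_, rfl⟩
  obtain ⟨K, hK⟩ : ∃ K : Set (ℝ × ℝ), K = Icc 0 l ×ˢ Icc t₀ t₁ := ⟨_, rfl⟩
  have hKc : IsCompact K := by rw [hK]; exact (isCompact_Icc).prod isCompact_Icc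
  have hKne : K.Nonempty := ⟨(0, t₀), by
    rw [hK]
    exact ⟨⟨le_refl _, hl.le⟩, ⟨le_refl _, h01.le⟩⟩⟩
  have huc : ContinuousOn u K := by
    rw [hu, hK]
    apply ContinuousOn.mul _ hc
    exact (Real.continuous_exp.comp (continuous_const.mul continuous_snd)).continuousOn
  obtain ⟨z, hzK, hzmax⟩ := hKc.exists_isMaxOn hKne huc
  have hzmax' : ∀ p ∈ K, u p ≤ u z := fun p hp => hzmax hp
  have hMpos : 0 < u z := by
    have h1 : (x₂, t₂) ∈ K := by rw [hK]; exact ⟨hx₂, ht₂⟩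
    have h2 : 0 < u (x₂, t₂) := by rw [hu]; exact mul_pos (Real.exp_pos _) hposw
    exact lt_of_lt_of_le h2 (hzmax' _ h1)
  have hzK' : z.1 ∈ Icc 0 l ∧ z.2 ∈ Icc t₀ t₁ := by rw [hK] at hzK; exact ⟨hzK.1, hzK.2⟩
  obtain ⟨⟨hz1a, hz1b⟩, hz2a, hz2b⟩ := hzK'
  have hwpos : 0 < w z.1 z.2 := by
    by_contra hle
    push_neg at hle
    have : u z ≤ 0 := by rw [hu]; exact mul_nonpos_of_nonneg_of_nonpos (Real.exp_pos _).le hle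
    linarith
  -- z.1 interior, z.2 in Ioc
  have hx0 : z.1 ≠ 0 := by
    intro h; rw [h] at hwpos; rw [hb0 z.2 ⟨hz2a, hz2b⟩] at hwpos; exact lt_irrefl _ hwpos
  have hxl : z.1 ≠ l := by
    intro h; rw [h] at hwpos; rw [hbl z.2 ⟨hz2a, hz2b⟩] at hwpos; exact lt_irrefl _ hwpos
  have hzt0 : z.2 ≠ t₀ := by
    intro h; rw [h] at hwpos; rw [hinit z.1 ⟨hz1a, hz1b⟩] at hwpos; exact lt_irrefl _ hwpos
  have hxIoo : z.1 ∈ Ioo 0 l := ⟨lt_of_le_of_ne hz1a (Ne.symm hx0), lt_of_le_of_ne hz1b hxl⟩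
  have htIoc : z.2 ∈ Ioc t₀ t₁ := ⟨lt_of_le_of_ne hz2a (Ne.symm hzt0), hz2b⟩
  -- time direction
  have hwt : lam * w z.1 z.2 ≤ deriv (fun s => w z.1 s) z.2 := by
    have hde : DifferentiableAt ℝ (fun s : ℝ => Real.exp (-lam * s)) z.2 :=
      (((differentiable_const (-lam)).mul differentiable_id).differentiableAt).exp
    have hdw := hdt z.1 hxIoo z.2 htIoc
    have hE : HasDerivAt (fun s : ℝ => Real.exp (-lam * s)) (-lam * Real.exp (-lam * z.2)) z.2 := by
      have := (hasDerivAt_id z.2).const_mul (-lam)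
      have h2 := (this.exp)
      simpa [mul_comm] using h2
    have hf : HasDerivAt (fun s => Real.exp (-lam * s) * w z.1 s)
        (-lam * Real.exp (-lam * z.2) * w z.1 z.2
          + Real.exp (-lam * z.2) * deriv (fun s => w z.1 s) z.2) z.2 :=
      hE.mul hdw.hasDerivAt
    have h0 : 0 ≤ deriv (fun s => Real.exp (-lam * s) * w z.1 s) z.2 := by
      apply derivNonnegLeftMax _ _ (hE.differentiableAt.mul hdw)
      have hmem : Ioo t₀ z.2 ∈ 𝓝[<] z.2 := Ioo_mem_nhdsLT_of_mem ⟨htIoc.1, le_refl _⟩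
      filter_upwards [hmem] with s hs
      have hmemK : (z.1, s) ∈ K := by rw [hK]; exact ⟨⟨hz1a, hz1b⟩, hs.1.le, hs.2.le.trans hz2b⟩
      have h7 := hzmax' _ hmemK
      rw [hu] at h7
      exact h7
    rw [hf.deriv] at h0
    have hexp := Real.exp_pos (-lam * z.2)
    nlinarith
  -- space direction
  have hloc : IsLocalMax (fun y => w y z.2) z.1 := by
    have hmem : Ioo (0:ℝ) l ∈ 𝓝 z.1 := Ioo_mem_nhds hxIoo.1 hxIoo.2
    filter_upwards [hmem] with y hy
    have h1 : (y, z.2) ∈ K := by rw [hK]; exact ⟨⟨hy.1.le, hy.2.le⟩, hz2a, hz2b⟩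
    have h2 := hzmax' _ h1
    have hexp := Real.exp_pos (-lam * z.2)
    rw [hu] at h2
    exact le_of_mul_le_mul_left h2 hexp
  have hderx : deriv (fun y => w y z.2) z.1 = 0 := hloc.deriv_eq_zero
  have hderxx : deriv (fun y => deriv (fun z' => w z' z.2) y) z.1 ≤ 0 := by
    apply derivDerivNonposLocalMax _ _ hloc _ (hdxx z.1 hxIoo z.2 htIoc)
    filter_upwards [Ioo_mem_nhds hxIoo.1 hxIoo.2] with y hy
    exact hdx y hy z.2 htIoc
  have hp := hpde z.1 hxIoo z.2 htIoc
  rw [hderx] at hp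
  have habs : d₁ ≤ lam - 1 := by rw [hlam]; simp [le_abs_self]
  nlinarith [mul_nonpos_of_nonneg_of_nonpos (sq_nonneg a₁) hderxx, hwpos]

/-- Classical solution on `[0,T]` of the delay heat equation
`v_t(x,t) = a₁² v_xx(x,t) + a₂² v_xx(x,t−τ) + b₁ v_x(x,t) + b₂ v_x(x,t−τ)
  + d₁ v(x,t) + d₂ v(x,t−τ) + g(x,t)` on `(0,l) × (0,T)`, with boundary conditions
`v(0,t) = θ₁(t)`, `v(l,t) = θ₂(t)` for `t ∈ (−τ,T)` and initial condition
`v(x,t) = ψ(x,t)` for `(x,t) ∈ (0,l) × (−τ,0)`: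
`v ∈ C⁰([0,l] × [−τ,T])`, `∂_t v ∈ C⁰([0,l] × [0,T])`,
`∂_xx v ∈ C⁰([0,l] × [0,T]) ∩ C⁰([0,l] × [−τ,0])`. -/
def IsDelayClassicalSolution (a₁ a₂ b₁ b₂ d₁ d₂ τ l T : ℝ)
    (g ψ : ℝ → ℝ → ℝ) (θ₁ θ₂ : ℝ → ℝ) (v : ℝ → ℝ → ℝ) : Prop :=
  ContinuousOn (fun p : ℝ × ℝ => v p.1 p.2) (Set.Icc 0 l ×ˢ Set.Icc (-τ) T) ∧
  ContinuousOn (fun p : ℝ × ℝ => deriv (fun s => v p.1 s) p.2) (Set.Icc 0 l ×ˢ Set.Icc 0 T) ∧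
  ContinuousOn (fun p : ℝ × ℝ => deriv (fun y => deriv (fun z => v z p.2) y) p.1)
    (Set.Icc 0 l ×ˢ Set.Icc 0 T) ∧
  ContinuousOn (fun p : ℝ × ℝ => deriv (fun y => deriv (fun z => v z p.2) y) p.1)
    (Set.Icc 0 l ×ˢ Set.Icc (-τ) 0) ∧
  (∀ x ∈ Set.Ioo 0 l, ∀ t ∈ Set.Ioo 0 T, DifferentiableAt ℝ (fun s => v x s) t) ∧
  (∀ x ∈ Set.Ioo 0 l, ∀ t ∈ Set.Ioo (-τ) T,
    DifferentiableAt ℝ (fun y => v y t) x ∧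
    DifferentiableAt ℝ (fun y => deriv (fun z => v z t) y) x) ∧
  (∀ x ∈ Set.Ioo 0 l, ∀ t ∈ Set.Ioo 0 T,
    deriv (fun s => v x s) t =
      a₁ ^ 2 * deriv (fun y => deriv (fun z => v z t) y) x
        + a₂ ^ 2 * deriv (fun y => deriv (fun z => v z (t - τ)) y) x
        + b₁ * deriv (fun y => v y t) x
        + b₂ * deriv (fun y => v y (t - τ)) x
        + d₁ * v x t + d₂ * v x (t - τ) + g x t) ∧
  (∀ t ∈ Set.Ioo (-τ) T, v 0 t = θ₁ t ∧ v l t = θ₂ t) ∧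
  (∀ x ∈ Set.Ioo 0 l, ∀ t ∈ Set.Ioo (-τ) 0, v x t = ψ x t)

private lemma stepLe (a₁ a₂ b₁ b₂ d₁ d₂ τ l T : ℝ)
    (hτ : 0 < τ) (hl : 0 < l) (hT : 0 < T)
    (g ψ : ℝ → ℝ → ℝ) (θ₁ θ₂ : ℝ → ℝ) (v₁ v₂ : ℝ → ℝ → ℝ)
    (h₁ : IsDelayClassicalSolution a₁ a₂ b₁ b₂ d₁ d₂ τ l T g ψ θ₁ θ₂ v₁)
    (h₂ : IsDelayClassicalSolution a₁ a₂ b₁ b₂ d₁ d₂ τ l T g ψ θ₁ θ₂ v₂)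
    (n : ℕ)
    (IH : ∀ x ∈ Icc 0 l, ∀ t ∈ Icc (-τ) (min ((n : ℝ) * τ) T), v₁ x t = v₂ x t)
    (hnT : (n : ℝ) * τ < T) (t₁ : ℝ)
    (ht₁ : t₁ ∈ Ioo ((n : ℝ) * τ) (min (((n : ℝ) + 1) * τ) T)) :
    ∀ x ∈ Icc 0 l, ∀ t ∈ Icc ((n : ℝ) * τ) t₁, v₁ x t ≤ v₂ x t := by
  obtain ⟨hc₁, hct₁, hcxx₁, hcxx₁', hdt₁, hdx₁, hpde₁, hbc₁, hic₁⟩ := h₁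
  obtain ⟨hc₂, hct₂, hcxx₂, hcxx₂', hdt₂, hdx₂, hpde₂, hbc₂, hic₂⟩ := h₂
  have ht₀0 : (0:ℝ) ≤ (n : ℝ) * τ := mul_nonneg (Nat.cast_nonneg n) hτ.le
  have ht₁T : t₁ < T := lt_of_lt_of_le ht₁.2 (min_le_right _ _)
  have ht₁τ : t₁ < ((n : ℝ) + 1) * τ := lt_of_lt_of_le ht₁.2 (min_le_left _ _)
  have hmin : min ((n : ℝ) * τ) T = (n : ℝ) * τ := min_eq_left hnT.le
  intro x hx t ht
  have key := heatMaxPrinciple a₁ b₁ d₁ l ((n : ℝ) * τ) t₁ hl ht₁.1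
    (fun x t => v₁ x t - v₂ x t)
    (by
      have hsub : Icc (0:ℝ) l ×ˢ Icc ((n : ℝ) * τ) t₁ ⊆ Icc 0 l ×ˢ Icc (-τ) T :=
        Set.prod_mono_right (Icc_subset_Icc (by linarith) ht₁T.le)
      exact (hc₁.mono hsub).sub (hc₂.mono hsub))
    (by
      intro x hx
      have := IH x hx ((n : ℝ) * τ) ⟨by linarith, by rw [hmin]⟩
      simpa [sub_eq_zero] using this)
    (by
      intro t ht
      have htm : t ∈ Ioo (-τ) T := ⟨by linarith [ht.1], lt_of_le_of_lt ht.2 ht₁T⟩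
      have e1 := (hbc₁ t htm).1
      have e2 := (hbc₂ t htm).1
      simp [e1, e2])
    (by
      intro t ht
      have htm : t ∈ Ioo (-τ) T := ⟨by linarith [ht.1], lt_of_le_of_lt ht.2 ht₁T⟩
      have e1 := (hbc₁ t htm).2
      have e2 := (hbc₂ t htm).2
      simp [e1, e2])
    (by
      intro x hx t ht
      have htm : t ∈ Ioo 0 T := ⟨lt_of_le_of_lt ht₀0 ht.1, lt_of_le_of_lt ht.2 ht₁T⟩
      exact (hdt₁ x hx t htm).sub (hdt₂ x hx t htm))
    (by
      intro x hx t ht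
      have htm : t ∈ Ioo (-τ) T := ⟨by linarith [ht.1, ht₀0], lt_of_le_of_lt ht.2 ht₁T⟩
      exact (hdx₁ x hx t htm).1.sub ((hdx₂ x hx t htm).1))
    (by
      intro x hx t ht
      have htm : t ∈ Ioo (-τ) T := ⟨by linarith [ht.1, ht₀0], lt_of_le_of_lt ht.2 ht₁T⟩
      have hEqw : (fun y => deriv (fun z => v₁ z t - v₂ z t) y)
          =ᶠ[𝓝 x] (fun y => deriv (fun z => v₁ z t) y - deriv (fun z => v₂ z t) y) := by
        filter_upwards [Ioo_mem_nhds hx.1 hx.2] with y hy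
        exact deriv_sub (hdx₁ y hy t htm).1 (hdx₂ y hy t htm).1
      rw [Filter.EventuallyEq.differentiableAt_iff hEqw]
      exact (hdx₁ x hx t htm).2.sub ((hdx₂ x hx t htm).2))
    (by
      intro x hx t ht
      have htm : t ∈ Ioo 0 T := ⟨lt_of_le_of_lt ht₀0 ht.1, lt_of_le_of_lt ht.2 ht₁T⟩
      have htm' : t ∈ Ioo (-τ) T := ⟨by linarith [htm.1], htm.2⟩
      have hs : t - τ ∈ Icc (-τ) (min ((n : ℝ) * τ) T) := by
        rw [hmin]
        constructor
        · linarith [htm.1]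
        · linarith [ht.2]
      have heqd : ∀ y ∈ Ioo 0 l, v₁ y (t - τ) = v₂ y (t - τ) := fun y hy =>
        IH y ⟨hy.1.le, hy.2.le⟩ _ hs
      have hder1 : ∀ y ∈ Ioo 0 l,
          deriv (fun z => v₁ z (t - τ)) y = deriv (fun z => v₂ z (t - τ)) y := by
        intro y hy
        apply Filter.EventuallyEq.deriv_eq
        filter_upwards [Ioo_mem_nhds hy.1 hy.2] with z hz using heqd z hz
      have hder2 : deriv (fun y => deriv (fun z => v₁ z (t - τ)) y) x
          = deriv (fun y => deriv (fun z => v₂ z (t - τ)) y) x := by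
        apply Filter.EventuallyEq.deriv_eq
        filter_upwards [Ioo_mem_nhds hx.1 hx.2] with y hy using hder1 y hy
      have hEqw : (fun y => deriv (fun z => v₁ z t - v₂ z t) y)
          =ᶠ[𝓝 x] (fun y => deriv (fun z => v₁ z t) y - deriv (fun z => v₂ z t) y) := by
        filter_upwards [Ioo_mem_nhds hx.1 hx.2] with y hy
        exact deriv_sub (hdx₁ y hy t htm').1 (hdx₂ y hy t htm').1
      have hw2 : deriv (fun y => deriv (fun z => v₁ z t - v₂ z t) y) x
          = deriv (fun y => deriv (fun z => v₁ z t) y) x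
            - deriv (fun y => deriv (fun z => v₂ z t) y) x := by
        rw [hEqw.deriv_eq]
        exact deriv_sub (hdx₁ x hx t htm').2 (hdx₂ x hx t htm').2
      have hwt : deriv (fun s => v₁ x s - v₂ x s) t
          = deriv (fun s => v₁ x s) t - deriv (fun s => v₂ x s) t :=
        deriv_sub (hdt₁ x hx t htm) (hdt₂ x hx t htm)
      have hwx : deriv (fun y => v₁ y t - v₂ y t) x
          = deriv (fun y => v₁ y t) x - deriv (fun y => v₂ y t) x :=
        deriv_sub (hdx₁ x hx t htm').1 (hdx₂ x hx t htm').1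
      show deriv (fun s => v₁ x s - v₂ x s) t
        = a₁ ^ 2 * deriv (fun y => deriv (fun z => v₁ z t - v₂ z t) y) x
          + b₁ * deriv (fun y => v₁ y t - v₂ y t) x + d₁ * (v₁ x t - v₂ x t)
      rw [hwt, hw2, hwx, hpde₁ x hx t htm, hpde₂ x hx t htm, hder2, hder1 x hx, heqd x hx]
      ring)
    x hx t ht
  simpa [sub_nonpos] using key

/-- Classical solutions of the linear 1D heat equation with a single constant delay
are unique: any two classical solutions coincide on `[0,l] × [−τ,T]`. -/
theorem uniqueness_of_delay_classical_solutions
    (a₁ a₂ b₁ b₂ d₁ d₂ τ l T : ℝ)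
    (ha₁ : a₁ ≠ 0) (ha₂ : a₂ ≠ 0) (hτ : 0 < τ) (hl : 0 < l) (hT : 0 < T)
    (g ψ : ℝ → ℝ → ℝ) (θ₁ θ₂ : ℝ → ℝ) (v₁ v₂ : ℝ → ℝ → ℝ)
    (h₁ : IsDelayClassicalSolution a₁ a₂ b₁ b₂ d₁ d₂ τ l T g ψ θ₁ θ₂ v₁)
    (h₂ : IsDelayClassicalSolution a₁ a₂ b₁ b₂ d₁ d₂ τ l T g ψ θ₁ θ₂ v₂) :
    ∀ x ∈ Set.Icc 0 l, ∀ t ∈ Set.Icc (-τ) T, v₁ x t = v₂ x t := by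
  have hfc : ContinuousOn (fun p : ℝ × ℝ => v₁ p.1 p.2 - v₂ p.1 p.2)
      (Icc 0 l ×ˢ Icc (-τ) T) := h₁.1.sub h₂.1
  have key : ∀ n : ℕ, ∀ x ∈ Icc 0 l, ∀ t ∈ Icc (-τ) (min ((n : ℝ) * τ) T), v₁ x t = v₂ x t := by
    intro n
    induction n with
    | zero =>
      intro x hx t ht
      simp only [Nat.cast_zero, zero_mul, min_eq_left hT.le] at ht
      have hz : ∀ p ∈ Ioo (0:ℝ) l ×ˢ Ioo (-τ) (0:ℝ),
          (fun p : ℝ × ℝ => v₁ p.1 p.2 - v₂ p.1 p.2) p = 0 := by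
        rintro ⟨y, s⟩ ⟨hy, hs⟩
        have e1 := h₁.2.2.2.2.2.2.2.2 y hy s hs
        have e2 := h₂.2.2.2.2.2.2.2.2 y hy s hs
        simp [e1, e2]
      have hA : Ioo (0:ℝ) l ×ˢ Ioo (-τ) (0:ℝ) ⊆ Icc (0:ℝ) l ×ˢ Icc (-τ) T :=
        Set.prod_mono Ioo_subset_Icc_self
          ((Ioo_subset_Icc_self).trans (Icc_subset_Icc le_rfl hT.le))
      have hcl : (x, t) ∈ closure (Ioo (0:ℝ) l ×ˢ Ioo (-τ) (0:ℝ)) := by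
        rw [closure_prod_eq, closure_Ioo hl.ne, closure_Ioo (by linarith : -τ ≠ (0:ℝ))]
        exact ⟨hx, ht⟩
      have hp : (x, t) ∈ Icc (0:ℝ) l ×ˢ Icc (-τ) T :=
        ⟨hx, ht.1, ht.2.trans hT.le⟩
      have := closureZero _ _ _ hA hfc hz hp hcl
      simpa [sub_eq_zero] using this
    | succ n IH =>
      by_cases hc : T ≤ (n : ℝ) * τ
      · intro x hx t ht
        apply IH x hx t
        rw [min_eq_right hc]
        rw [min_eq_right (by push_cast; nlinarith : T ≤ ((n + 1 : ℕ) : ℝ) * τ)] at ht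
        exact ht
      · push_neg at hc
        have ht₀0 : (0:ℝ) ≤ (n : ℝ) * τ := mul_nonneg (Nat.cast_nonneg n) hτ.le
        set tm : ℝ := min (((n : ℝ) + 1) * τ) T with htm
        have htm0 : (n : ℝ) * τ < tm := lt_min (by nlinarith) hc
        have htmT : tm ≤ T := min_le_right _ _
        have hIH' : ∀ x ∈ Icc 0 l, ∀ t ∈ Icc (-τ) (min ((n : ℝ) * τ) T), v₂ x t = v₁ x t :=
          fun x hx t ht => (IH x hx t ht).symm
        have hall : ∀ p ∈ Icc (0:ℝ) l ×ˢ Ico (-τ) tm,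
            (fun p : ℝ × ℝ => v₁ p.1 p.2 - v₂ p.1 p.2) p = 0 := by
          rintro ⟨y, s⟩ ⟨hy, hs⟩
          by_cases hsle : s ≤ (n : ℝ) * τ
          · have := IH y hy s ⟨hs.1, by rw [min_eq_left hc.le]; exact hsle⟩
            simpa [sub_eq_zero] using this
          · push_neg at hsle
            have hsIoo : s ∈ Ioo ((n : ℝ) * τ) tm := ⟨hsle, hs.2⟩
            have le1 := stepLe a₁ a₂ b₁ b₂ d₁ d₂ τ l T hτ hl hT g ψ θ₁ θ₂ v₁ v₂ h₁ h₂ n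
              IH hc s hsIoo y hy s ⟨hsle.le, le_rfl⟩
            have le2 := stepLe a₁ a₂ b₁ b₂ d₁ d₂ τ l T hτ hl hT g ψ θ₁ θ₂ v₂ v₁ h₂ h₁ n
              hIH' hc s hsIoo y hy s ⟨hsle.le, le_rfl⟩
            simp only
            linarith
        intro x hx t ht
        have htcast : ((n + 1 : ℕ) : ℝ) = (n : ℝ) + 1 := by push_cast; ring
        rw [htcast] at ht
        have hA : Icc (0:ℝ) l ×ˢ Ico (-τ) tm ⊆ Icc (0:ℝ) l ×ˢ Icc (-τ) T :=
          Set.prod_mono le_rfl (Ico_subset_Icc_self.trans (Icc_subset_Icc le_rfl htmT))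
        have hcl : (x, t) ∈ closure (Icc (0:ℝ) l ×ˢ Ico (-τ) tm) := by
          rw [closure_prod_eq, isClosed_Icc.closure_eq,
            closure_Ico (by linarith : -τ ≠ tm)]
          exact ⟨hx, ht⟩
        have hp : (x, t) ∈ Icc (0:ℝ) l ×ˢ Icc (-τ) T := ⟨hx, ht.1, ht.2.trans htmT⟩
        have := closureZero _ _ _ hA hfc hall hp hcl
        simpa [sub_eq_zero] using this
  intro x hx t ht
  set n : ℕ := ⌈T / τ⌉₊ with hn
  have hTn : T ≤ (n : ℝ) * τ := by
    have := Nat.le_ceil (T / τ)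
    rw [div_le_iff₀ hτ] at this
    exact this.trans (by rw [hn])
  exact key n x hx t (by rw [min_eq_right hTn]; exact ht)

end
end

section
/- Let a, b ∈ ℝ, τ > 0, and set b₁ := e^{−aτ} b. Then the function x₀(t) = e^{at} exp_τ{b₁, t}, t ≥ 0, is the unique solution of the delay differential equation ẋ(t) = a x(t) + b x(t − τ) for t ≥ 0 satisfying the initial condition x₀(t) = e^{at} for t ∈ [−τ, 0]. -/
open Set Filter Topology Real

noncomputable section

/-- The delayed exponential function `exp_τ{b, t}`. -/
def delayedExp (b τ t : ℝ) : ℝ :=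
  if t < -τ then 0
  else if t < 0 then 1
  else ∑ j ∈ Finset.range (⌊t / τ⌋.toNat + 2),
    b ^ j * (t - ((j : ℝ) - 1) * τ) ^ j / (Nat.factorial j)

/-- `y` solves `ẏ(t) = a y(t) + b y(t−τ)` for `t ≥ 0` with initial condition
`y(t) = e^{at}` on `[−τ,0]`. -/
def IsExpInitialSolution (a b τ : ℝ) (y : ℝ → ℝ) : Prop :=
  ContinuousOn y (Set.Ici (-τ)) ∧
  (∀ t ∈ Set.Icc (-τ) (0:ℝ), y t = Real.exp (a * t)) ∧
  (∀ t ∈ Set.Ici (0:ℝ), HasDerivWithinAt y (a * y t + b * y (t - τ)) (Set.Ici 0) t)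

/-- Auxiliary smooth (on `Ici 0`) version of `delayedExp` using `max`. -/
def gsum (b₁ τ : ℝ) (N : ℕ) (t : ℝ) : ℝ :=
  ∑ j ∈ Finset.range N, b₁ ^ j * max (t - ((j : ℝ) - 1) * τ) 0 ^ j / (Nat.factorial j)

lemma continuous_gsum (b₁ τ : ℝ) (N : ℕ) : Continuous (gsum b₁ τ N) := by
  unfold gsum
  refine continuous_finset_sum _ fun j _ => ?_
  exact (continuous_const.mul
    (((continuous_id.sub continuous_const).max continuous_const).pow j)).div_const _

lemma delayedExp_eq_gsum (b₁ τ : ℝ) (hτ : 0 < τ) {t : ℝ} (ht : -τ ≤ t) {N : ℕ}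
    (hN : t < ((N : ℝ) - 1) * τ) :
    delayedExp b₁ τ t = gsum b₁ τ N t := by
  have hN1 : 1 ≤ N := by
    by_contra h
    push_neg at h
    interval_cases N
    simp only [Nat.cast_zero] at hN
    nlinarith
  rcases lt_or_ge t 0 with ht0 | ht0
  · rw [delayedExp, if_neg (not_lt.2 ht), if_pos ht0]
    unfold gsum
    rw [Finset.sum_eq_single 0]
    · simp
    · intro j hj hj0
      have hj1 : (1:ℝ) ≤ j := by exact_mod_cast Nat.one_le_iff_ne_zero.2 hj0
      have hneg : t - ((j:ℝ)-1)*τ ≤ 0 := by nlinarith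
      rw [max_eq_right hneg, zero_pow hj0]
      simp
    · intro h
      exact absurd (Finset.mem_range.2 hN1) h
  · have hfloor : (0:ℤ) ≤ ⌊t/τ⌋ := Int.floor_nonneg.2 (div_nonneg ht0 hτ.le)
    set K := ⌊t/τ⌋.toNat with hK
    have hKcast : (K:ℝ) = (⌊t/τ⌋ : ℝ) := by
      rw [hK]; exact_mod_cast Int.toNat_of_nonneg hfloor
    have hKle : (K:ℝ) ≤ t/τ := by rw [hKcast]; exact Int.floor_le _
    have hKlt : t/τ < (K:ℝ) + 1 := by rw [hKcast]; exact Int.lt_floor_add_one _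
    have hKN : K + 2 ≤ N := by
      have h1 : t/τ < (N:ℝ) - 1 := by rw [div_lt_iff₀ hτ]; linarith
      have h2 : (K:ℝ) + 1 < (N:ℝ) := by linarith
      exact_mod_cast h2
    rw [delayedExp, if_neg (not_lt.2 ht), if_neg (not_lt.2 ht0)]
    unfold gsum
    rw [← Finset.sum_subset (Finset.range_subset_range.2 hKN) ?_]
    · refine Finset.sum_congr rfl fun j hj => ?_
      rw [Finset.mem_range] at hj
      have hjle : (j:ℝ) ≤ (K:ℝ) + 1 := by exact_mod_cast Nat.lt_succ_iff.1 hj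
      have hnn : 0 ≤ t - ((j:ℝ)-1)*τ := by
        have hKt : (K:ℝ) * τ ≤ t := by
          rw [← le_div_iff₀ hτ]; exact hKle
        nlinarith
      rw [max_eq_left hnn]
    · intro j _ hj
      rw [Finset.mem_range, not_lt] at hj
      have hjge : (K:ℝ) + 2 ≤ (j:ℝ) := by exact_mod_cast hj
      have hlt : t < ((K:ℝ) + 1) * τ := by rw [← div_lt_iff₀ hτ]; exact hKlt
      have hneg : t - ((j:ℝ)-1)*τ ≤ 0 := by nlinarith
      have hj0 : j ≠ 0 := by omega
      rw [max_eq_right hneg, zero_pow hj0]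
      simp

lemma delayedExp_of_nonpos (b₁ τ : ℝ) (hτ : 0 < τ) {t : ℝ} (ht : -τ ≤ t) (ht0 : t ≤ 0) :
    delayedExp b₁ τ t = 1 := by
  obtain ⟨N, hNt⟩ : ∃ N : ℕ, t < ((N : ℝ) - 1) * τ := by
    obtain ⟨n, hn⟩ := exists_nat_gt (t/τ + 1)
    refine ⟨n, ?_⟩
    have : t/τ < (n:ℝ) - 1 := by linarith
    rw [div_lt_iff₀ hτ] at this
    linarith
  rw [delayedExp_eq_gsum b₁ τ hτ ht hNt]
  have hN1 : 1 ≤ N := by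
    by_contra h
    push_neg at h
    interval_cases N
    simp only [Nat.cast_zero] at hNt
    nlinarith
  unfold gsum
  rw [Finset.sum_eq_single 0]
  · simp
  · intro j hj hj0
    have hj1 : (1:ℝ) ≤ j := by exact_mod_cast Nat.one_le_iff_ne_zero.2 hj0
    have hneg : t - ((j:ℝ)-1)*τ ≤ 0 := by nlinarith
    rw [max_eq_right hneg, zero_pow hj0]
    simp
  · intro h
    exact absurd (Finset.mem_range.2 hN1) h

lemma hasDerivAt_maxpow (j : ℕ) (hj : 2 ≤ j) (t : ℝ) :
    HasDerivAt (fun s : ℝ => max s 0 ^ j) ((j : ℝ) * max t 0 ^ (j - 1)) t := by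
  rcases lt_trichotomy t 0 with ht | ht | ht
  · have h0 : (fun s : ℝ => max s 0 ^ j) =ᶠ[𝓝 t] fun _ => (0:ℝ) := by
      filter_upwards [Iio_mem_nhds ht] with s hs
      rw [max_eq_right (le_of_lt hs), zero_pow (by omega : j ≠ 0)]
    have hc : HasDerivAt (fun _ : ℝ => (0:ℝ)) 0 t := hasDerivAt_const _ _
    have := hc.congr_of_eventuallyEq h0
    rw [max_eq_right ht.le, zero_pow (by omega : j - 1 ≠ 0), mul_zero]
    exact this
  · subst ht
    rw [max_self, zero_pow (by omega : j - 1 ≠ 0), mul_zero]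
    rw [hasDerivAt_iff_isLittleO]
    simp only [max_self, zero_pow (by omega : j ≠ 0), sub_zero, smul_zero, mul_zero]
    rw [Asymptotics.isLittleO_iff]
    intro c hc
    filter_upwards [Metric.ball_mem_nhds (0:ℝ) (lt_min hc one_pos)] with s hs
    rw [Metric.mem_ball, Real.dist_eq, sub_zero] at hs
    have h1 : |s| ≤ 1 := (hs.trans_le (min_le_right _ _)).le
    have h2 : |s| ≤ c := (hs.trans_le (min_le_left _ _)).le
    have hm : |max s 0| ≤ |s| := by
      rw [abs_of_nonneg (le_max_right _ _)]
      exact max_le (le_abs_self s) (abs_nonneg s)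
    calc ‖max s 0 ^ j‖ = |max s 0| ^ j := by rw [Real.norm_eq_abs, abs_pow]
      _ ≤ |s| ^ j := pow_le_pow_left₀ (abs_nonneg _) hm j
      _ ≤ |s| ^ 2 := pow_le_pow_of_le_one (abs_nonneg _) h1 hj
      _ = |s| * |s| := sq |s|
      _ ≤ c * |s| := mul_le_mul_of_nonneg_right h2 (abs_nonneg _)
      _ = c * ‖s‖ := by rw [Real.norm_eq_abs]
  · have h0 : (fun s : ℝ => max s 0 ^ j) =ᶠ[𝓝 t] fun s => s ^ j := by
      filter_upwards [Ioi_mem_nhds ht] with s hs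
      rw [max_eq_left (le_of_lt hs)]
    have hp : HasDerivAt (fun s : ℝ => s ^ j) ((j:ℝ) * t ^ (j-1)) t := hasDerivAt_pow j t
    have := hp.congr_of_eventuallyEq h0
    rw [max_eq_left ht.le]
    exact this

lemma hasDerivAt_maxpow_shift (c : ℝ) (j : ℕ) (hj : 2 ≤ j) (t : ℝ) :
    HasDerivAt (fun s : ℝ => max (s - c) 0 ^ j) ((j : ℝ) * max (t - c) 0 ^ (j - 1)) t := by
  have h := hasDerivAt_maxpow j hj (t - c)
  have hsub : HasDerivAt (fun s : ℝ => s - c) 1 t := (hasDerivAt_id t).sub_const c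
  have := h.comp t hsub
  simp only [mul_one] at this
  exact this

lemma hasDerivWithinAt_gsum (b₁ τ : ℝ) (hτ : 0 < τ) (N : ℕ) {t : ℝ} (ht : 0 ≤ t) :
    HasDerivWithinAt (gsum b₁ τ (N+1)) (b₁ * gsum b₁ τ N (t - τ)) (Ici 0) t := by
  have key : ∀ j ∈ Finset.range (N+1), HasDerivWithinAt
      (fun s => b₁ ^ j * max (s - ((j:ℝ)-1)*τ) 0 ^ j / (Nat.factorial j))
      (b₁ ^ j * ((j:ℝ) * max (t - ((j:ℝ)-1)*τ) 0 ^ (j-1)) / (Nat.factorial j)) (Ici 0) t := by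
    intro j _
    match j with
    | 0 =>
      have : (fun s : ℝ => b₁ ^ 0 * max (s - ((0:ℕ):ℝ)-1*τ) 0 ^ 0 / (Nat.factorial 0 : ℝ))
          = fun _ => (1:ℝ) := by
        funext s; simp
      simp only [pow_zero, Nat.cast_zero, CharP.cast_eq_zero, zero_mul, mul_zero, zero_div,
        one_mul]
      have h1 : HasDerivWithinAt (fun _ : ℝ => (1:ℝ)) 0 (Ici 0) t :=
        (hasDerivAt_const t 1).hasDerivWithinAt
      refine h1.congr (fun s _ => ?_) ?_ <;> simp
    | 1 =>
      have hid : HasDerivWithinAt (fun s : ℝ => max s 0) 1 (Ici 0) t := by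
        have h : HasDerivWithinAt (fun s : ℝ => s) 1 (Ici 0) t :=
          (hasDerivAt_id t).hasDerivWithinAt
        exact h.congr (fun s hs => max_eq_left hs) (max_eq_left ht)
      have h3 := hid.const_mul b₁
      have hgoal : HasDerivWithinAt
          (fun s : ℝ => b₁ ^ 1 * max (s - (((1:ℕ):ℝ)-1)*τ) 0 ^ 1 / (Nat.factorial 1 : ℝ))
          (b₁ * 1) (Ici 0) t := by
        refine h3.congr (fun s _ => ?_) ?_ <;> norm_num
      convert hgoal using 1
      norm_num
    | (j+2) =>
      have h := hasDerivAt_maxpow_shift ((((j+2:ℕ):ℝ)-1)*τ) (j+2) (by omega) t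
      exact ((h.const_mul (b₁ ^ (j+2))).div_const _).hasDerivWithinAt
  have hsum := HasDerivWithinAt.fun_sum key
  have hfun : (fun s => ∑ j ∈ Finset.range (N+1),
      b₁ ^ j * max (s - ((j:ℝ)-1)*τ) 0 ^ j / (Nat.factorial j)) = gsum b₁ τ (N+1) := rfl
  rw [hfun] at hsum
  have hval : ∑ j ∈ Finset.range (N+1),
      b₁ ^ j * ((j:ℝ) * max (t - ((j:ℝ)-1)*τ) 0 ^ (j-1)) / (Nat.factorial j)
      = b₁ * gsum b₁ τ N (t - τ) := by
    rw [Finset.sum_range_succ']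
    simp only [Nat.cast_zero, pow_zero, zero_mul, mul_zero, zero_div, add_zero]
    unfold gsum
    rw [Finset.mul_sum]
    refine Finset.sum_congr rfl fun i _ => ?_
    have harg : t - (((i+1:ℕ):ℝ)-1)*τ = (t - τ) - ((i:ℝ)-1)*τ := by push_cast; ring
    rw [harg]
    have hfac : ((Nat.factorial (i+1) : ℕ) : ℝ) = ((i:ℝ)+1) * (Nat.factorial i : ℝ) := by
      rw [Nat.factorial_succ]; push_cast; ring
    have hne : (Nat.factorial i : ℝ) ≠ 0 := by positivity
    have hne1 : ((i:ℝ)+1) ≠ 0 := by positivity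
    rw [hfac]
    have hsucc : (i + 1 - 1) = i := rfl
    rw [hsucc]
    push_cast
    field_simp
    ring
  rwa [hval] at hsum

lemma continuousOn_delayedExp (b₁ τ : ℝ) (hτ : 0 < τ) :
    ContinuousOn (delayedExp b₁ τ) (Ici (-τ)) := by
  intro t ht
  obtain ⟨N, hNt⟩ : ∃ N : ℕ, t + 1 < ((N : ℝ) - 1) * τ := by
    obtain ⟨n, hn⟩ := exists_nat_gt ((t+1)/τ + 1)
    refine ⟨n, ?_⟩
    have h1 : (t+1)/τ < (n:ℝ) - 1 := by linarith
    rw [div_lt_iff₀ hτ] at h1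
    linarith
  rw [← continuousWithinAt_inter (Iio_mem_nhds (lt_add_one t))]
  refine ((continuous_gsum b₁ τ N).continuousWithinAt).congr (fun s hs => ?_) ?_
  · exact delayedExp_eq_gsum b₁ τ hτ hs.1 (lt_trans hs.2 hNt)
  · exact delayedExp_eq_gsum b₁ τ hτ ht (by linarith)

lemma hasDerivWithinAt_delayedExp (b₁ τ : ℝ) (hτ : 0 < τ) {t : ℝ} (ht : 0 ≤ t) :
    HasDerivWithinAt (delayedExp b₁ τ) (b₁ * delayedExp b₁ τ (t - τ)) (Ici 0) t := by
  obtain ⟨N, hNt⟩ : ∃ N : ℕ, t + 1 < (N : ℝ) * τ := by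
    obtain ⟨n, hn⟩ := exists_nat_gt ((t+1)/τ)
    refine ⟨n, ?_⟩
    rw [div_lt_iff₀ hτ] at hn
    linarith
  have h1 : HasDerivWithinAt (gsum b₁ τ (N+1)) (b₁ * gsum b₁ τ N (t-τ)) (Ici 0) t :=
    hasDerivWithinAt_gsum b₁ τ hτ N ht
  have heq : delayedExp b₁ τ (t - τ) = gsum b₁ τ N (t - τ) := by
    refine delayedExp_eq_gsum b₁ τ hτ (by linarith) ?_
    nlinarith
  rw [heq]
  rw [← hasDerivWithinAt_inter (Iio_mem_nhds (lt_add_one t))]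
  refine (h1.mono inter_subset_left).congr (fun s hs => ?_) ?_
  · have hs0 : (0:ℝ) ≤ s := hs.1
    refine delayedExp_eq_gsum b₁ τ hτ (by linarith) ?_
    push_cast
    have := hs.2
    simp only [mem_Iio] at this
    linarith
  · refine delayedExp_eq_gsum b₁ τ hτ (by linarith) ?_
    push_cast
    linarith

lemma isExpInitialSolution_delayedExp (a b τ : ℝ) (hτ : 0 < τ) :
    IsExpInitialSolution a b τ
      (fun t => Real.exp (a * t) * delayedExp (Real.exp (-a * τ) * b) τ t) := by
  set b₁ := Real.exp (-a * τ) * b with hb₁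
  refine ⟨?_, ?_, ?_⟩
  · exact ((Real.continuous_exp.comp (continuous_const.mul continuous_id)).continuousOn).mul
      (continuousOn_delayedExp b₁ τ hτ)
  · intro t htm
    show Real.exp (a * t) * delayedExp b₁ τ t = Real.exp (a * t)
    rw [delayedExp_of_nonpos b₁ τ hτ htm.1 htm.2, mul_one]
  · intro t ht
    simp only [mem_Ici] at ht
    have he : HasDerivWithinAt (fun s => Real.exp (a * s)) (a * Real.exp (a * t)) (Ici 0) t := by
      have h0 : HasDerivAt (fun s : ℝ => a * s) a t := by
        simpa using (hasDerivAt_id t).const_mul a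
      have h := h0.exp
      rw [mul_comm] at h
      exact h.hasDerivWithinAt
    have hd := hasDerivWithinAt_delayedExp b₁ τ hτ ht
    have hmul := he.mul hd
    have hexp : Real.exp (a * (t - τ)) = Real.exp (a * t) * Real.exp (-a * τ) := by
      rw [← Real.exp_add]; ring_nf
    have hval : a * ((fun t => Real.exp (a * t) * delayedExp b₁ τ t) t) +
        b * ((fun t => Real.exp (a * t) * delayedExp b₁ τ t) (t - τ)) =
        a * Real.exp (a * t) * delayedExp b₁ τ t +
        Real.exp (a * t) * (b₁ * delayedExp b₁ τ (t - τ)) := by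
      simp only
      rw [hexp, hb₁]
      ring
    rw [show (a * ((fun t => Real.exp (a * t) * delayedExp b₁ τ t) t) +
        b * ((fun t => Real.exp (a * t) * delayedExp b₁ τ t) (t - τ))) =
        (a * Real.exp (a * t) * delayedExp b₁ τ t +
        Real.exp (a * t) * (b₁ * delayedExp b₁ τ (t - τ))) from hval]
    exact hmul

lemma expInitialSolution_unique (a b τ : ℝ) (hτ : 0 < τ) {y₁ y₂ : ℝ → ℝ}
    (h₁ : IsExpInitialSolution a b τ y₁) (h₂ : IsExpInitialSolution a b τ y₂) :
    ∀ t ∈ Ici (-τ), y₁ t = y₂ t := by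
  obtain ⟨hc₁, hi₁, hd₁⟩ := h₁
  obtain ⟨hc₂, hi₂, hd₂⟩ := h₂
  have key : ∀ k : ℕ, ∀ t ∈ Icc (-τ) ((k:ℝ)*τ), y₁ t = y₂ t := by
    intro k
    induction k with
    | zero =>
      intro t ht
      simp only [Nat.cast_zero, zero_mul] at ht
      rw [hi₁ t ht, hi₂ t ht]
    | succ k ih =>
      intro t ht
      have htub : t ≤ ((k:ℝ)+1)*τ := by
        have := ht.2; push_cast at this; linarith
      rcases le_or_gt t ((k:ℝ)*τ) with h | h
      · exact ih t ⟨ht.1, h⟩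
      · set w := fun s => Real.exp (-a*s) * (y₁ s - y₂ s) with hw
        have hk0 : (0:ℝ) ≤ (k:ℝ)*τ := by positivity
        have hsub : Icc ((k:ℝ)*τ) (((k:ℝ)+1)*τ) ⊆ Ici (-τ) := fun s hs => by
          simp only [mem_Ici]; linarith [hs.1]
        have hwc : ContinuousOn w (Icc ((k:ℝ)*τ) (((k:ℝ)+1)*τ)) := by
          refine ContinuousOn.mul ?_ ((hc₁.mono hsub).sub (hc₂.mono hsub))
          exact (Real.continuous_exp.comp (continuous_const.mul continuous_id)).continuousOn
        have hwd : ∀ x ∈ Ico ((k:ℝ)*τ) (((k:ℝ)+1)*τ), HasDerivWithinAt w 0 (Ici x) x := by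
          intro x hx
          have hx0 : (0:ℝ) ≤ x := le_trans hk0 hx.1
          have hz : y₁ (x - τ) = y₂ (x - τ) := by
            refine ih (x-τ) ⟨?_, ?_⟩ <;> [linarith; linarith [hx.2]]
          have hmono : Ici x ⊆ Ici (0:ℝ) := Ici_subset_Ici.2 hx0
          have h1 := (hd₁ x hx0).mono hmono
          have h2 := (hd₂ x hx0).mono hmono
          have hdiff := h1.sub h2
          have hexp : HasDerivAt (fun s => Real.exp (-a*s)) (-a * Real.exp (-a*x)) x := by
            have h0 : HasDerivAt (fun s : ℝ => -a * s) (-a) x := by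
              simpa using (hasDerivAt_id x).const_mul (-a)
            have h := h0.exp
            rw [mul_comm] at h
            exact h
          have hm := (hexp.hasDerivWithinAt).mul hdiff
          have : (-a * Real.exp (-a*x)) * (y₁ x - y₂ x) +
              Real.exp (-a*x) * ((a * y₁ x + b * y₁ (x-τ)) - (a * y₂ x + b * y₂ (x-τ))) = 0 := by
            rw [hz]; ring
          rw [Pi.sub_apply, this] at hm
          exact hm
        have hconst := constant_of_has_deriv_right_zero hwc hwd t ⟨h.le, htub⟩
        have hwk : w ((k:ℝ)*τ) = 0 := by
          have h0 := ih ((k:ℝ)*τ) ⟨by linarith, le_refl _⟩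
          simp [hw, h0]
        have hwt : w t = 0 := hconst.trans hwk
        have hexp_ne : Real.exp (-a*t) ≠ 0 := Real.exp_ne_zero _
        have := mul_eq_zero.1 hwt
        rcases this with h' | h'
        · exact absurd h' hexp_ne
        · linarith [sub_eq_zero.1 h']
  intro t ht
  obtain ⟨k, hk⟩ := exists_nat_ge (t/τ)
  refine key k t ⟨ht, ?_⟩
  rwa [← div_le_iff₀ hτ]

/-- With `b₁ = e^{−aτ} b`, the function `x₀(t) = e^{at} exp_τ{b₁, t}` is the unique
solution of `ẋ(t) = a x(t) + b x(t−τ)`, `t ≥ 0`, with `x₀(t) = e^{at}` for `t ∈ [−τ,0]`. -/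
theorem delayedExp_exp_initial_unique_solution (a b τ : ℝ) (hτ : 0 < τ) :
    IsExpInitialSolution a b τ (fun t => Real.exp (a * t) * delayedExp (Real.exp (-a * τ) * b) τ t) ∧
    ∀ y : ℝ → ℝ, IsExpInitialSolution a b τ y →
      ∀ t ∈ Set.Ici (-τ),
        y t = Real.exp (a * t) * delayedExp (Real.exp (-a * τ) * b) τ t := by
  refine ⟨isExpInitialSolution_delayedExp a b τ hτ, ?_⟩
  intro y hy t ht
  exact expInitialSolution_unique a b τ hτ hy (isExpInitialSolution_delayedExp a b τ hτ) t ht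

end
end
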